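/- arXiv:1603.09042 — 7 statements merged into one kernel-verified Lean document; each statement's English description precedes it below -/
import Mathlib

section
/- Let B be a Bézout domain in which every nonzero prime ideal is maximal. Then for all nonzero elements a, b ∈ B, the following are equivalent: (i) there exists a positive integer n such that a^n ∈ bB (i.e., a lies in the radical of the ideal bB); (ii) for every x ∈ B, if a and x are coprime then b and x are coprime. -/
/-- Let `B` be a Bézout domain in which every nonzero prime ideal is maximal. For all
nonzero `a b : B`, `a` lies in the radical of `bB` iff every `x` coprime to `a` is
coprime to `b`. -/
theorem stmt_0 (B : Type*) [CommRing B] [IsDomain B] [IsBezout B]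
    (hmax : ∀ P : Ideal B, P.IsPrime → P ≠ ⊥ → P.IsMaximal)
    (a b : B) (ha : a ≠ 0) (hb : b ≠ 0) :
    (∃ n : ℕ, 0 < n ∧ a ^ n ∈ Ideal.span {b}) ↔
      (∀ x : B, IsCoprime a x → IsCoprime b x) := by
  constructor
  · rintro ⟨n, hn, hmem⟩ x hax
    have hdvd : b ∣ a ^ n := Ideal.mem_span_singleton.mp hmem
    exact (hax.pow_left).of_isCoprime_of_dvd_left hdvd
  · intro h
    -- show a ∈ radical (span {b})
    have hrad : a ∈ (Ideal.span {b}).radical := by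
      rw [Ideal.radical_eq_sInf]
      refine Ideal.mem_sInf.mpr ?_
      rintro P ⟨hbP, hPprime⟩
      by_contra haP
      have hPne : P ≠ ⊥ := by
        rintro rfl
        exact hb (Ideal.mem_bot.mp (hbP (Ideal.subset_span rfl)))
      have hPmax := hmax P hPprime hPne
      obtain ⟨z, i, hiP, hzi⟩ := hPmax.exists_inv haP
      have hcop : IsCoprime a i := ⟨z, 1, by linear_combination hzi⟩
      obtain ⟨u, v, huv⟩ := h i hcop
      have hbP' : b ∈ P := hbP (Ideal.subset_span rfl)
      have : (1 : B) ∈ P := huv ▸ P.add_mem (P.mul_mem_left u hbP') (P.mul_mem_left v hiP)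
      exact hPprime.ne_top (Ideal.eq_top_of_isUnit_mem P this isUnit_one)
    obtain ⟨n, hn⟩ := hrad
    rcases Nat.eq_zero_or_pos n with rfl | hpos
    · refine ⟨1, one_pos, ?_⟩
      have : Ideal.span ({b} : Set B) = ⊤ :=
        Ideal.eq_top_of_isUnit_mem _ (by simpa using hn) isUnit_one
      simp [this]
    · exact ⟨n, hpos, hn⟩
end

section
/- Let B be a commutative integral domain such that every element of B has a square root in B (for every r ∈ B there exists s ∈ B with s^2 = r). Then for every nonzero prime ideal P of B, the maximal ideal of the localization B_P is not a principal ideal. -/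
/-- If every element of a domain `B` has a square root in `B`, then for every nonzero
prime ideal `P` of `B` the maximal ideal of the localization `B_P` is not principal. -/
theorem stmt_4 (B : Type*) [CommRing B] [IsDomain B]
    (hsq : ∀ r : B, ∃ s : B, s ^ 2 = r)
    (P : Ideal B) [P.IsPrime] (hP : P ≠ ⊥) :
    ¬(IsLocalRing.maximalIdeal (Localization.AtPrime P)).IsPrincipal := by
  rintro ⟨π, hπ⟩
  -- π is nonzero since P ≠ ⊥
  obtain ⟨p, hpP, hp0⟩ := Submodule.exists_mem_ne_zero_of_ne_bot hP
  have hmem : algebraMap B (Localization.AtPrime P) p ∈ IsLocalRing.maximalIdeal (Localization.AtPrime P) :=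
    (IsLocalization.AtPrime.to_map_mem_maximal_iff (Localization.AtPrime P) P p).mpr hpP
  have hπmem : π ∈ IsLocalRing.maximalIdeal (Localization.AtPrime P) := by
    rw [hπ, Ideal.submodule_span_eq]; exact Ideal.mem_span_singleton_self π
  have hπ0 : π ≠ 0 := by
    rintro rfl
    rw [hπ] at hmem
    simp only [Ideal.submodule_span_eq, Ideal.span_singleton_eq_bot.mpr rfl,
      Ideal.mem_bot] at hmem
    exact hp0 (IsLocalization.injective (Localization.AtPrime P) P.primeCompl_le_nonZeroDivisors
      (by simpa using hmem))
  -- every element of (Localization.AtPrime P) has a square root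
  have hsqL : ∃ s : (Localization.AtPrime P), s ^ 2 = π := by
    obtain ⟨⟨r, u⟩, hru⟩ := IsLocalization.mk'_surjective P.primeCompl π
    dsimp only at hru
    obtain ⟨s, hs⟩ := hsq r
    obtain ⟨t, ht⟩ := hsq (u : B)
    have htc : t ∈ P.primeCompl := by
      intro hmemP
      exact u.2 (ht ▸ Ideal.pow_mem_of_mem P hmemP 2 (by norm_num))
    have h1 : (⟨t, htc⟩ : P.primeCompl) ^ 2 = u := Subtype.ext (by simpa using ht)
    refine ⟨IsLocalization.mk' (Localization.AtPrime P) s ⟨t, htc⟩, ?_⟩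
    rw [← hru, ← hs, ← h1, IsLocalization.mk'_pow]
  obtain ⟨s, hs⟩ := hsqL
  have hsmem : s ∈ IsLocalRing.maximalIdeal (Localization.AtPrime P) := by
    have hprime : (IsLocalRing.maximalIdeal (Localization.AtPrime P)).IsPrime :=
      (IsLocalRing.maximalIdeal.isMaximal (Localization.AtPrime P)).isPrime
    have : s ^ 2 ∈ IsLocalRing.maximalIdeal (Localization.AtPrime P) := hs ▸ hπmem
    exact hprime.mem_of_pow_mem 2 this
  rw [hπ, Ideal.submodule_span_eq, Ideal.mem_span_singleton] at hsmem
  obtain ⟨a, ha⟩ := hsmem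
  rw [ha] at hs
  have key : π * (π * a ^ 2 - 1) = 0 := by ring_nf; linear_combination hs
  rcases mul_eq_zero.mp key with h | h
  · exact hπ0 h
  · have hunit : IsUnit π := IsUnit.of_mul_eq_one (a ^ 2) (sub_eq_zero.mp h)
    exact (IsLocalRing.mem_maximalIdeal π).mp hπmem hunit
end

section
/- Let 𝔸 be the ring of algebraic integers. Then for every maximal ideal P of 𝔸, the residue field 𝔸/P is infinite. -/
open Polynomial

/-- Every monic polynomial of nonzero degree over the ring of algebraic integers
has a root there. -/
lemma aux_monic_root (q : Polynomial (integralClosure ℤ (AlgebraicClosure ℚ)))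
    (hq : q.Monic) (hdeg : q.degree ≠ 0) :
    ∃ α : integralClosure ℤ (AlgebraicClosure ℚ), q.eval α = 0 := by
  let f : (integralClosure ℤ (AlgebraicClosure ℚ)) →+* AlgebraicClosure ℚ :=
    algebraMap _ _
  have hfinj : Function.Injective f := Subtype.val_injective
  have hmap : (q.map f).degree ≠ 0 := by rwa [hq.degree_map f]
  obtain ⟨x, hx⟩ := IsAlgClosed.exists_root (q.map f) hmap
  have hx' : eval x (q.map f) = 0 := hx
  have hxint : IsIntegral (integralClosure ℤ (AlgebraicClosure ℚ)) x :=
    ⟨q, hq, by show eval₂ _ x q = 0; rw [eval₂_eq_eval_map]; exact hx'⟩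
  have hxZ : IsIntegral ℤ x := isIntegral_trans x hxint
  refine ⟨⟨x, hxZ⟩, hfinj ?_⟩
  rw [map_zero, ← eval₂_hom f (⟨x, hxZ⟩ : integralClosure ℤ (AlgebraicClosure ℚ))]
  have hfa : f (⟨x, hxZ⟩ : integralClosure ℤ (AlgebraicClosure ℚ)) = x := rfl
  rw [hfa, ← eval_map]
  exact hx'

/-- For every maximal ideal `P` of the ring `𝔸` of algebraic integers (the integral
closure of `ℤ` in an algebraic closure of `ℚ`), the residue field `𝔸 ⧸ P` is infinite. -/
theorem stmt_8 (P : Ideal (integralClosure ℤ (AlgebraicClosure ℚ))) (hP : P.IsMaximal) :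
    Infinite ((integralClosure ℤ (AlgebraicClosure ℚ)) ⧸ P) := by
  haveI := hP
  letI : Field ((integralClosure ℤ (AlgebraicClosure ℚ)) ⧸ P) := Ideal.Quotient.field P
  haveI : IsAlgClosed ((integralClosure ℤ (AlgebraicClosure ℚ)) ⧸ P) := by
    apply IsAlgClosed.of_exists_root
    intro p hmonic hirr
    have hsurj : Function.Surjective (Ideal.Quotient.mk P) := Ideal.Quotient.mk_surjective
    have hlift : p ∈ Polynomial.lifts (Ideal.Quotient.mk P) := by
      obtain ⟨q, hq⟩ := Polynomial.map_surjective _ hsurj p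
      exact ⟨q, hq⟩
    obtain ⟨q, hq1, hq2, hq3⟩ := Polynomial.lifts_and_degree_eq_and_monic hlift hmonic
    obtain ⟨α, hα⟩ := aux_monic_root q hq3 (by rw [hq2]; exact (Polynomial.degree_pos_of_irreducible hirr).ne')
    refine ⟨Ideal.Quotient.mk P α, ?_⟩
    rw [← hq1, eval_map, eval₂_hom, hα, map_zero]
  infer_instance
end

section
/- The ring 𝔸 of algebraic integers is a Bézout domain: every finitely generated ideal of 𝔸 is principal. -/
open NumberField IntermediateField
open scoped nonZeroDivisors

lemma ideal_pow_inj {A : Type*} [CommRing A] [IsDedekindDomain A] {I J : Ideal A}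
    (hI : I ≠ 0) (hJ : J ≠ 0) {n : ℕ} (hn : n ≠ 0) (h : I ^ n = J ^ n) : I = J := by
  classical
  have h1 : n • UniqueFactorizationMonoid.normalizedFactors I
      = n • UniqueFactorizationMonoid.normalizedFactors J := by
    rw [← UniqueFactorizationMonoid.normalizedFactors_pow,
      ← UniqueFactorizationMonoid.normalizedFactors_pow, h]
  have h2 : UniqueFactorizationMonoid.normalizedFactors I
      = UniqueFactorizationMonoid.normalizedFactors J := by
    ext a
    have := congrArg (Multiset.count a) h1
    simpa [Multiset.count_nsmul, Nat.mul_left_cancel_iff (Nat.pos_of_ne_zero hn)] using this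
  calc I = (UniqueFactorizationMonoid.normalizedFactors I).prod :=
        (associated_iff_eq.mp (UniqueFactorizationMonoid.prod_normalizedFactors hI)).symm
    _ = (UniqueFactorizationMonoid.normalizedFactors J).prod := by rw [h2]
    _ = J := associated_iff_eq.mp (UniqueFactorizationMonoid.prod_normalizedFactors hJ)

local notation "Abar" => AlgebraicClosure ℚ
local notation "RR" => integralClosure ℤ (AlgebraicClosure ℚ)

set_option synthInstance.maxHeartbeats 400000 in
set_option maxHeartbeats 2000000 in
lemma key_span_principal (s : Finset RR) :
    (Ideal.span (s : Set RR)).IsPrincipal := by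
  classical
  by_cases hs0 : ∀ x ∈ s, x = (0 : RR)
  · have hb : Ideal.span ((s : Set RR)) = ⊥ := by
      rw [Ideal.span_eq_bot]; exact fun x hx => hs0 x hx
    rw [hb]; exact ⟨⟨0, (Submodule.span_zero_singleton _).symm⟩⟩
  push_neg at hs0
  obtain ⟨x₀, hx₀s, hx₀⟩ := hs0
  set T : Set Abar := (fun x : RR => (x : Abar)) '' (s : Set RR) with hT
  have hTfin : T.Finite := ((s : Set RR).toFinite).image _
  set K : IntermediateField ℚ Abar := IntermediateField.adjoin ℚ T with hK
  haveI : Finite T := hTfin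
  haveI : FiniteDimensional ℚ K :=
    IntermediateField.finiteDimensional_adjoin fun x _ =>
      (@Algebra.IsAlgebraic.isAlgebraic ℚ Abar _ _ _ (AlgebraicClosure.isAlgebraic ℚ) x).isIntegral
  haveI : NumberField K := {}
  have hmemK : ∀ x : s, ((x : RR) : Abar) ∈ K := fun x =>
    IntermediateField.subset_adjoin ℚ T ⟨x, x.2, rfl⟩
  have hintK : ∀ x : s, IsIntegral ℤ (⟨((x : RR) : Abar), hmemK x⟩ : K) := by
    intro x
    have h1 : IsIntegral ℤ (algebraMap K Abar ⟨((x : RR) : Abar), hmemK x⟩) := (x : RR).2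
    exact (isIntegral_algebraMap_iff (algebraMap K Abar).injective).mp h1
  set b : s → 𝓞 K := fun x => ⟨⟨((x : RR) : Abar), hmemK x⟩, hintK x⟩ with hb
  set J : Ideal (𝓞 K) := Ideal.span (Set.range b) with hJ
  have hJne : J ≠ 0 := by
    intro h0
    have hmem : b ⟨x₀, hx₀s⟩ ∈ J := Ideal.subset_span ⟨⟨x₀, hx₀s⟩, rfl⟩
    rw [h0] at hmem
    have h1 : b ⟨x₀, hx₀s⟩ = 0 := hmem
    apply hx₀
    have h2 : ((x₀ : Abar)) = 0 := congrArg (fun z : 𝓞 K => ((z : K) : Abar)) h1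
    exact Subtype.ext h2
  have hJmem : J ∈ (Ideal (𝓞 K))⁰ := mem_nonZeroDivisors_of_ne_zero hJne
  set n := Fintype.card (ClassGroup (𝓞 K)) with hn
  have hnpos : 0 < n := Fintype.card_pos
  have hprin : (J ^ n).IsPrincipal := by
    have h1 : ClassGroup.mk0 (⟨J, hJmem⟩ ^ n) = 1 := by
      rw [map_pow]; exact pow_card_eq_one
    have h2 := (ClassGroup.mk0_eq_one_iff
      ((⟨J, hJmem⟩ ^ n : (Ideal (𝓞 K))⁰)).2).mp (by rwa [Subtype.coe_eta])
    simpa using h2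
  obtain ⟨α, hα⟩ := hprin
  have hJnne : J ^ n ≠ 0 := pow_ne_zero n hJne
  have hαne : α ≠ 0 := by
    rintro rfl
    exact hJnne (by rw [hα]; simp)
  have hαKne : (α : K) ≠ 0 := by
    simpa using (RingOfIntegers.coe_injective (K := K)).ne hαne
  obtain ⟨γ, hγ⟩ := IsAlgClosed.exists_pow_nat_eq (algebraMap K Abar (α : K)) hnpos
  have hγint : IsIntegral ℤ γ := by
    refine IsIntegral.of_pow hnpos ?_
    rw [hγ]
    exact map_isIntegral_int (algebraMap K Abar) α.2
  have hγne : γ ≠ 0 := by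
    intro h0
    apply hαKne
    have : algebraMap K Abar (α : K) = 0 := by rw [← hγ, h0, zero_pow hnpos.ne']
    exact (map_eq_zero _).mp this
  set L : IntermediateField ℚ Abar := IntermediateField.adjoin ℚ (T ∪ {γ}) with hL
  have hKL : K ≤ L := IntermediateField.adjoin.mono _ _ _ Set.subset_union_left
  have hγL : γ ∈ L := IntermediateField.subset_adjoin ℚ _ (Or.inr rfl)
  haveI : Finite ↥(T ∪ {γ} : Set Abar) := (hTfin.union (Set.finite_singleton γ)).to_subtype
  haveI : FiniteDimensional ℚ L :=
    IntermediateField.finiteDimensional_adjoin fun x _ =>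
      (@Algebra.IsAlgebraic.isAlgebraic ℚ Abar _ _ _ (AlgebraicClosure.isAlgebraic ℚ) x).isIntegral
  haveI : NumberField L := {}
  set f : 𝓞 K →+* 𝓞 L :=
    RingOfIntegers.mapRingHom (IntermediateField.inclusion hKL) with hf
  have hγ'int : IsIntegral ℤ (⟨γ, hγL⟩ : L) :=
    (isIntegral_algebraMap_iff (algebraMap L Abar).injective).mp hγint
  set γ' : 𝓞 L := ⟨⟨γ, hγL⟩, hγ'int⟩ with hγ'
  set J' : Ideal (𝓞 L) := Ideal.map f J with hJ'def
  have hJ'n : J' ^ n = Ideal.span {f α} := by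
    rw [hJ'def, ← Ideal.map_pow, hα]
    show Ideal.map f (Ideal.span {α}) = _
    rw [Ideal.map_span, Set.image_singleton]
  have hγ'pow : γ' ^ n = f α := by
    refine RingOfIntegers.ext ?_
    refine Subtype.ext ?_
    have h1 : (((γ' ^ n : 𝓞 L) : L) : Abar) = γ ^ n := by
      push_cast
      rfl
    have h2 : (((f α : 𝓞 L) : L) : Abar) = algebraMap K Abar (α : K) := by
      rfl
    exact Subtype.ext_iff.mp (Subtype.ext (h1.trans (hγ.trans h2.symm)))
  have hγ'ne : γ' ≠ 0 := by
    intro h0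
    exact hγne (congrArg (fun z : 𝓞 L => ((z : L) : Abar)) h0)
  have hspanne : Ideal.span {γ'} ≠ 0 := by
    intro h0
    exact hγ'ne (Ideal.span_singleton_eq_bot.mp h0)
  have hJ'ne : J' ≠ 0 := by
    intro h0
    have : J' ^ n = 0 := by rw [h0, zero_pow hnpos.ne']
    rw [hJ'n] at this
    have hfα : f α = 0 := Ideal.span_singleton_eq_bot.mp this
    apply hαKne
    have : ((f α : 𝓞 L) : L) = 0 := by rw [hfα]; rfl
    have h2 : algebraMap K Abar (α : K) = 0 := by
      rw [show algebraMap K Abar (α : K) = (((f α : 𝓞 L) : L) : Abar) from rfl, this]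
      rfl
    exact (map_eq_zero _).mp h2
  have hJ'γ : J' = Ideal.span {γ'} :=
    ideal_pow_inj hJ'ne hspanne hnpos.ne'
      (by rw [hJ'n, Ideal.span_singleton_pow, hγ'pow])
  -- descend to the ring of all algebraic integers
  let g : 𝓞 L →+* integralClosure ℤ Abar :=
    { toFun := fun x => ⟨((x : L) : Abar), map_isIntegral_int (algebraMap L Abar) x.2⟩
      map_one' := by ext; simp
      map_mul' := fun x y => by ext; simp
      map_zero' := by ext; simp
      map_add' := fun x y => by ext; simp }
  have hgf : ∀ x : s, g (f (b x)) = (x : RR) := by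
    intro x
    ext
    rfl
  have hfinal : Ideal.span (s : Set RR) = Ideal.span {g γ'} := by
    have h1 : Ideal.map g J' = Ideal.span {g γ'} := by
      rw [hJ'γ]
      show Ideal.map g (Ideal.span {γ'}) = _
      rw [Ideal.map_span, Set.image_singleton]
    rw [← h1, hJ'def, hJ, Ideal.map_map]
    show _ = Ideal.map (g.comp f) (Ideal.span (Set.range b))
    rw [Ideal.map_span]
    have himg : (g.comp f) '' (Set.range b) = (s : Set RR) := by
      ext z
      simp only [Set.mem_image, Set.mem_range, Finset.mem_coe]
      constructor
      · rintro ⟨-, ⟨x, rfl⟩, rfl⟩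
        have := hgf x
        rw [show (g.comp f) (b x) = g (f (b x)) from rfl, this]
        exact x.2
      · intro hz
        exact ⟨b ⟨z, hz⟩, ⟨⟨z, hz⟩, rfl⟩, hgf ⟨z, hz⟩⟩
    rw [himg]
  exact ⟨⟨g γ', hfinal⟩⟩

set_option synthInstance.maxHeartbeats 400000 in
/-- The ring `𝔸` of algebraic integers (the integral closure of `ℤ` in an algebraic closure
of `ℚ`) is a Bézout domain: every finitely generated ideal is principal. -/
theorem stmt_10 (I : Ideal (integralClosure ℤ (AlgebraicClosure ℚ))) (hI : I.FG) :
    I.IsPrincipal := by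
  obtain ⟨s, rfl⟩ := hI
  exact key_span_principal s
end

section
/- For every nonzero prime ideal P of the ring 𝔸 of algebraic integers, the maximal ideal of the localization 𝔸_P is not finitely generated. -/
set_option maxHeartbeats 1000000 in
set_option synthInstance.maxHeartbeats 400000 in
/-- For every nonzero prime ideal `P` of the ring `𝔸` of algebraic integers, the maximal
ideal of the localization `𝔸_P` is not finitely generated. -/
theorem stmt_11 (P : Ideal (integralClosure ℤ (AlgebraicClosure ℚ)))
    [P.IsPrime] (h0 : P ≠ ⊥) :
    ¬(IsLocalRing.maximalIdeal (Localization.AtPrime P)).FG := by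
  intro hFG
  have sq : ∀ x : integralClosure ℤ (AlgebraicClosure ℚ), x ∈ P →
      ∃ z : integralClosure ℤ (AlgebraicClosure ℚ), z ∈ P ∧ z ^ 2 = x := by
    intro x hx
    obtain ⟨z, hz⟩ := IsAlgClosed.exists_pow_nat_eq (x : AlgebraicClosure ℚ) zero_lt_two
    have hzint : IsIntegral ℤ z := by
      have h1 : IsIntegral (integralClosure ℤ (AlgebraicClosure ℚ)) z :=
        ⟨Polynomial.X ^ 2 - Polynomial.C x,
          (Polynomial.monic_X_pow 2).sub_of_left (by
            simpa using Polynomial.degree_C_le.trans_lt (by norm_num)), by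
          simp only [Polynomial.eval₂_sub, Polynomial.eval₂_pow, Polynomial.eval₂_X,
            Polynomial.eval₂_C, hz]
          exact sub_eq_zero.mpr rfl⟩
      exact isIntegral_trans _ h1
    refine ⟨⟨z, hzint⟩, ?_, ?_⟩
    · have hm : (⟨z, hzint⟩ : integralClosure ℤ (AlgebraicClosure ℚ)) *
          ⟨z, hzint⟩ ∈ P := by
        convert hx using 1
        ext; simpa [sq] using hz
      exact ((Ideal.IsPrime.mem_or_mem ‹P.IsPrime› hm)).elim id id
    · ext; simpa using hz
  have hle : IsLocalRing.maximalIdeal (Localization.AtPrime P) ≤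
      IsLocalRing.maximalIdeal (Localization.AtPrime P) •
        IsLocalRing.maximalIdeal (Localization.AtPrime P) := by
    rw [smul_eq_mul, ← Localization.AtPrime.map_eq_maximalIdeal,
      Ideal.map_le_iff_le_comap]
    intro x hx
    rw [Ideal.mem_comap]
    obtain ⟨z, hzP, hz2⟩ := sq x hx
    have h3 : algebraMap _ (Localization.AtPrime P) z ∈
        Ideal.map (algebraMap _ (Localization.AtPrime P)) P :=
      Ideal.mem_map_of_mem _ hzP
    rw [← hz2, pow_two, map_mul]
    exact Ideal.mul_mem_mul h3 h3
  have hbot : IsLocalRing.maximalIdeal (Localization.AtPrime P) = ⊥ :=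
    Submodule.eq_bot_of_le_smul_of_le_jacobson_bot _ _ hFG hle
      (by rw [IsLocalRing.jacobson_eq_maximalIdeal ⊥ bot_ne_top])
  obtain ⟨x, hxP, hx0⟩ := Submodule.exists_mem_ne_zero_of_ne_bot h0
  have h6 := Ideal.mem_map_of_mem (algebraMap _ (Localization.AtPrime P)) hxP
  rw [Localization.AtPrime.map_eq_maximalIdeal, hbot, Ideal.mem_bot] at h6
  exact hx0 (IsLocalization.injective (Localization.AtPrime P)
    P.primeCompl_le_nonZeroDivisors (h6.trans (map_zero _).symm))
end

section
/- Let p be a prime and let B be the integral closure of the polynomial ring 𝔽_p[t] in an algebraic closure of the rational function field 𝔽_p(t). Then for every maximal ideal P of B, the residue field B/P is infinite. -/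
set_option synthInstance.maxHeartbeats 1000000

/-- Let `p` be a prime and `B` the integral closure of `𝔽_p[t]` in an algebraic closure of
`𝔽_p(t)`. For every maximal ideal `P` of `B`, the residue field `B ⧸ P` is infinite. -/
theorem stmt_14 (p : ℕ) [Fact p.Prime]
    (P : Ideal (integralClosure (Polynomial (ZMod p))
      (AlgebraicClosure (RatFunc (ZMod p))))) (hP : P.IsMaximal) :
    Infinite ((integralClosure (Polynomial (ZMod p))
      (AlgebraicClosure (RatFunc (ZMod p)))) ⧸ P) := by
  set K := AlgebraicClosure (RatFunc (ZMod p)) with hK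
  haveI : IsScalarTower (ZMod p) (Polynomial (ZMod p)) K := inferInstance
  let f : AlgebraicClosure (ZMod p) →ₐ[ZMod p] K := IsAlgClosed.lift
  have hmem : ∀ x : AlgebraicClosure (ZMod p),
      f x ∈ integralClosure (Polynomial (ZMod p)) K := by
    intro x
    have h1 : IsIntegral (ZMod p) (f x) :=
      ((Algebra.IsIntegral.isIntegral (R := ZMod p) x).map f)
    exact h1.tower_top
  let ι : AlgebraicClosure (ZMod p) →+* integralClosure (Polynomial (ZMod p)) K :=
    RingHom.codRestrict f.toRingHom (integralClosure (Polynomial (ZMod p)) K).toSubring hmem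
  haveI : Nontrivial ((integralClosure (Polynomial (ZMod p)) K) ⧸ P) :=
    Ideal.Quotient.nontrivial_iff.mpr hP.ne_top
  have hinj : Function.Injective ((Ideal.Quotient.mk P).comp ι) :=
    RingHom.injective _
  exact Infinite.of_injective _ hinj
end

section
/- Let B be a Prüfer domain (every nonzero finitely generated ideal of B is invertible as a fractional ideal) such that: (a) for every b ∈ B and every positive integer n there exists d ∈ B with d^n = b; and (b) for all a, b ∈ B, not both zero, there exists a positive integer n such that the n-th power of the ideal aB + bB is a principal ideal. Then B is a Bézout domain: every ideal of the form aB + bB is principal. -/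
/-- Let `B` be a Prüfer domain (every nonzero finitely generated ideal is invertible as a
fractional ideal) such that (a) every element of `B` has an `n`-th root for every positive
`n`, and (b) for all `a b` not both zero, some positive power of the ideal `aB + bB` is
principal. Then every ideal `aB + bB` is principal. -/
theorem stmt_15 (B : Type*) [CommRing B] [IsDomain B]
    (hpruf : ∀ I : Ideal B, I.FG → I ≠ ⊥ →
      IsUnit ((I : FractionalIdeal (nonZeroDivisors B) (FractionRing B))))
    (hroot : ∀ b : B, ∀ n : ℕ, 0 < n → ∃ d : B, d ^ n = b)
    (hpow : ∀ a b : B, ¬(a = 0 ∧ b = 0) →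
      ∃ n : ℕ, 0 < n ∧ ((Ideal.span {a, b} : Ideal B) ^ n).IsPrincipal) :
    ∀ a b : B, (Ideal.span {a, b} : Ideal B).IsPrincipal := by
  intro a b
  by_cases h0 : a = 0 ∧ b = 0
  · obtain ⟨rfl, rfl⟩ := h0
    exact ⟨0, by simp⟩
  · obtain ⟨n, hn, hprin⟩ := hpow a b h0
    obtain ⟨c, hc⟩ := hprin
    set I : Ideal B := Ideal.span {a, b} with hIdef
    have hIne : I ≠ ⊥ := by
      intro h
      refine h0 ⟨?_, ?_⟩
      · have : a ∈ I := Ideal.subset_span (by simp)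
        simpa [h] using this
      · have : b ∈ I := Ideal.subset_span (by simp)
        simpa [h] using this
    have hcne : c ≠ 0 := by
      rintro rfl
      have hbot : I ^ n = ⊥ := by
        rw [hc]; exact Ideal.span_singleton_eq_bot.mpr rfl
      obtain ⟨x, hx, hxne⟩ := Submodule.exists_mem_ne_zero_of_ne_bot hIne
      have hxn : x ^ n ∈ I ^ n := Ideal.pow_mem_pow hx n
      rw [hbot, Ideal.mem_bot] at hxn
      exact hxne (pow_eq_zero_iff hn.ne' |>.mp hxn)
    obtain ⟨d, hd⟩ := hroot c n hn
    have hdne : d ≠ 0 := by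
      rintro rfl
      exact hcne (by simpa [zero_pow hn.ne'] using hd.symm)
    set J : Ideal B := Ideal.span {d} with hJdef
    have hIJn : I ^ n = J ^ n := by
      rw [hJdef, Ideal.span_singleton_pow, hd]; exact hc
    have hJprin : J.IsPrincipal := ⟨d, rfl⟩
    have hIfg : I.FG := Submodule.fg_span ((Set.finite_singleton b).insert a)
    have hJfg : J.FG := Submodule.fg_span (Set.finite_singleton d)
    have hdJ : d ∈ J := by rw [hJdef]; exact Ideal.subset_span rfl
    have hdmem : d ^ (n - 1) ∈ J ^ (n - 1) := Ideal.pow_mem_pow hdJ _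
    have hdpne : d ^ (n - 1) ≠ 0 := pow_ne_zero _ hdne
    clear_value I J
    clear hc hd hIdef hJdef hdne h0 hcne hIne
    -- telescoping ideal
    set S : Ideal B := ∑ i ∈ Finset.range n, I ^ i * J ^ (n - 1 - i) with hSdef
    have hIS : I * S = ∑ i ∈ Finset.range n, I ^ (i + 1) * J ^ (n - (i + 1)) := by
      rw [hSdef, Finset.mul_sum]
      refine Finset.sum_congr rfl fun i hi => ?_
      simp only [Finset.mem_range] at hi
      have : n - 1 - i = n - (i + 1) := by omega
      rw [this, ← mul_assoc, ← pow_succ']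
    have hJS : J * S = ∑ i ∈ Finset.range n, I ^ i * J ^ (n - i) := by
      rw [hSdef, Finset.mul_sum]
      refine Finset.sum_congr rfl fun i hi => ?_
      simp only [Finset.mem_range] at hi
      have h1 : n - i = (n - 1 - i) + 1 := by omega
      rw [h1, pow_succ]
      ring
    have hJn_le_S1 : J ^ (n - 1) ≤ S := by
      have : I ^ 0 * J ^ (n - 1 - 0) ≤ S := by
        rw [hSdef]
        exact Finset.single_le_sum (f := fun i => I ^ i * J ^ (n - 1 - i))
          (fun i _ => bot_le) (Finset.mem_range.mpr hn)
      simpa using this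
    have hJn_le_JS : J ^ n ≤ J * S := by
      calc J ^ n = J * J ^ (n - 1) := by
            rw [← pow_succ']; congr 1; omega
        _ ≤ J * S := Ideal.mul_mono_right hJn_le_S1
    have hJn_le_IS : J ^ n ≤ I * S := by
      have h1 : I ^ (n - 1) ≤ S := by
        have : I ^ (n - 1) * J ^ (n - 1 - (n - 1)) ≤ S := by
          rw [hSdef]
          exact Finset.single_le_sum (f := fun i => I ^ i * J ^ (n - 1 - i))
            (fun i _ => bot_le) (Finset.mem_range.mpr (by omega))
        simpa using this
      calc J ^ n = I ^ n := hIJn.symm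
        _ = I * I ^ (n - 1) := by rw [← pow_succ']; congr 1; omega
        _ ≤ I * S := Ideal.mul_mono_right h1
    have hISJS : I * S = J * S := by
      have e1 : ∑ i ∈ Finset.range (n + 1), I ^ i * J ^ (n - i)
          = I * S + I ^ 0 * J ^ (n - 0) := by
        rw [Finset.sum_range_succ' (fun i => I ^ i * J ^ (n - i)) n, hIS]
      have e2 : ∑ i ∈ Finset.range (n + 1), I ^ i * J ^ (n - i)
          = J * S + I ^ n * J ^ (n - n) := by
        rw [Finset.sum_range_succ (fun i => I ^ i * J ^ (n - i)) n, hJS]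
      have h1 : I ^ 0 * J ^ (n - 0) = J ^ n := by simp
      have h2 : I ^ n * J ^ (n - n) = J ^ n := by simp [hIJn]
      have key : I * S + J ^ n = J * S + J ^ n := by
        have k := e1.symm.trans e2
        rwa [h1, h2] at k
      rw [Submodule.add_eq_sup, Submodule.add_eq_sup, sup_eq_left.mpr hJn_le_IS,
        sup_eq_left.mpr hJn_le_JS] at key
      exact key
    -- S is finitely generated and nonzero
    have hSfg : S.FG := by
      rw [hSdef]
      refine Finset.sum_induction _ Submodule.FG (fun x y hx hy => ?_) ?_ fun i _ => ?_
      · exact hx.sup hy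
      · exact Submodule.fg_bot
      · exact Submodule.FG.mul (Submodule.FG.pow hIfg i) (Submodule.FG.pow hJfg _)
    have hSne : S ≠ ⊥ := by
      intro h
      have : d ^ (n - 1) ∈ S := hJn_le_S1 hdmem
      rw [h, Ideal.mem_bot] at this
      exact hdpne this
    have hU := hpruf S hSfg hSne
    clear_value S
    -- cancel in fractional ideals
    have h1 : (I : FractionalIdeal (nonZeroDivisors B) (FractionRing B)) * S
        = (J : FractionalIdeal (nonZeroDivisors B) (FractionRing B)) * S := by
      rw [← FractionalIdeal.coeIdeal_mul, ← FractionalIdeal.coeIdeal_mul, hISJS]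
    have hIJ : I = J := FractionalIdeal.coeIdeal_injective (hU.mul_right_cancel h1)
    exact hIJ ▸ hJprin
end
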